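/- Define f₀ : (0,1) → ℝ by f₀(q) = q^{−1}·Σ_{n=0}^{∞} (−1)^n·q^{n(n+1)/2}. Then f₀ is twice differentiable on (0,1), and as q tends to 1 from the left: f₀(q) tends to 1/2, the derivative f₀′(q) tends to −5/8, and (1/2)·f₀″(q) tends to 23/32. -/

import Mathlib

open Filter Topology
open Polynomial Finset
open scoped fwdDiff

/-- The function `f₀(q) = q⁻¹ ∑_{n=0}^{∞} (-1)ⁿ q^{n(n+1)/2}` (for `0 < q < 1` the series
converges absolutely; this formula defines `f₀` on all of `ℝ`, with junk values where
the series does not converge). -/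
noncomputable def f₀ (q : ℝ) : ℝ := q⁻¹ * ∑' n : ℕ, (-1 : ℝ) ^ n * q ^ (n * (n + 1) / 2)

namespace F0Proof

/-- Triangular numbers. -/
def T (n : ℕ) : ℕ := n * (n + 1) / 2

lemma two_T (n : ℕ) : 2 * T n = n * (n + 1) := by
  unfold T
  have h : Even (n * (n + 1)) := Nat.even_mul_succ_self n
  obtain ⟨k, hk⟩ := h
  omega

lemma T_cast (n : ℕ) : ((T n : ℕ) : ℝ) = ((n : ℝ) ^ 2 + n) / 2 := by
  have h := two_T n
  have h2 : ((2 * T n : ℕ) : ℝ) = ((n * (n + 1) : ℕ) : ℝ) := by rw [h]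
  push_cast at h2
  nlinarith [h2]

lemma T_ge (n : ℕ) : n ≤ T n := by
  have := two_T n; nlinarith [this]

lemma T_half_sq (n : ℕ) : (n : ℝ) ^ 2 / 2 ≤ ((T n : ℕ) : ℝ) := by
  rw [T_cast]
  have : (0:ℝ) ≤ n := n.cast_nonneg
  nlinarith

/-! ### Summability helpers -/

lemma summable_pow_mul_geom (k : ℕ) {r : ℝ} (h0 : 0 < r) (h1 : r < 1) :
    Summable (fun n : ℕ => ((n : ℝ) + 1) ^ k * r ^ n) := by
  have hbase : Summable (fun n : ℕ => (n : ℝ) ^ k * r ^ n) := by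
    have : ‖r‖ < 1 := by rw [Real.norm_eq_abs, abs_of_pos h0]; exact h1
    exact summable_pow_mul_geometric_of_norm_lt_one k this
  have hshift : Summable (fun n : ℕ => ((n + 1 : ℕ) : ℝ) ^ k * r ^ (n + 1)) :=
    (summable_nat_add_iff 1).mpr hbase
  have := hshift.mul_left r⁻¹
  refine this.congr fun n => ?_
  push_cast
  rw [pow_succ]
  field_simp

lemma summable_T (k : ℕ) {q : ℝ} (h0 : 0 < q) (h1 : q < 1) :
    Summable (fun n : ℕ => ((n : ℝ) + 1) ^ k * q ^ T n) := by
  refine Summable.of_nonneg_of_le (fun n => by positivity) (fun n => ?_)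
    (summable_pow_mul_geom k h0 h1)
  have : q ^ T n ≤ q ^ n := pow_le_pow_of_le_one h0.le h1.le (T_ge n)
  have hp : (0:ℝ) ≤ ((n : ℝ) + 1) ^ k := by positivity
  nlinarith [this, hp]

lemma summable_T_pred (k : ℕ) {q : ℝ} (h0 : 0 < q) (h1 : q < 1) :
    Summable (fun n : ℕ => ((n : ℝ) + 1) ^ k * q ^ (T n - 1)) := by
  refine Summable.of_nonneg_of_le (fun n => by positivity) (fun n => ?_)
    ((summable_pow_mul_geom k h0 h1).mul_left q⁻¹)
  have hqi : q * q⁻¹ = 1 := mul_inv_cancel₀ h0.ne'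
  rcases Nat.eq_zero_or_pos n with hn | hn
  · subst hn
    simp [T]
    nlinarith [h1.le, h0.le]
  · have h1' : 1 ≤ T n := le_trans hn (T_ge n)
    have e : q ^ (T n - 1) * q = q ^ T n := by
      rw [← pow_succ]
      congr 1
      omega
    have hTn : q ^ T n ≤ q ^ n := pow_le_pow_of_le_one h0.le h1.le (T_ge n)
    have hTn' : q ^ (T n - 1) * q ≤ q ^ n := by rw [e]; exact hTn
    have h2 := mul_le_mul_of_nonneg_right hTn' (inv_nonneg.mpr h0.le)
    have h3 : q ^ (T n - 1) ≤ q ^ n * q⁻¹ := by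
      calc q ^ (T n - 1) = q ^ (T n - 1) * (q * q⁻¹) := by rw [hqi]; ring
      _ = q ^ (T n - 1) * q * q⁻¹ := by ring
      _ ≤ q ^ n * q⁻¹ := h2
    have hp : (0:ℝ) ≤ ((n : ℝ) + 1) ^ k := by positivity
    calc ((n : ℝ) + 1) ^ k * q ^ (T n - 1) ≤ ((n : ℝ) + 1) ^ k * (q ^ n * q⁻¹) :=
          mul_le_mul_of_nonneg_left h3 hp
      _ = q⁻¹ * (((n : ℝ) + 1) ^ k * q ^ n) := by ring

/-! ### The alternating-series Euler transform -/

lemma summable_fwdDiff {b : ℕ → ℝ} (hb : Summable b) : Summable (Δ_[1] b) := by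
  have h1 : Summable (fun n : ℕ => b (n + 1)) := (summable_nat_add_iff 1).mpr hb
  exact (h1.sub hb).congr fun n => by simp [fwdDiff]

lemma summable_fwdDiff_iter {b : ℕ → ℝ} (hb : Summable b) (j : ℕ) :
    Summable ((Δ_[1])^[j] b) := by
  induction j generalizing b with
  | zero => simpa using hb
  | succ j ih =>
    rw [Function.iterate_succ_apply]
    exact ih (summable_fwdDiff hb)

lemma summable_alt {b : ℕ → ℝ} (hb : Summable b) :
    Summable (fun n : ℕ => (-1 : ℝ) ^ n * b n) := by
  exact Summable.of_abs (hb.abs.congr fun n => by simp [abs_mul, abs_pow])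

lemma step_tsum {b : ℕ → ℝ} (hb : Summable b) :
    ∑' n : ℕ, (-1 : ℝ) ^ n * b n
      = b 0 / 2 - (1 / 2) * ∑' n : ℕ, (-1 : ℝ) ^ n * (Δ_[1] b) n := by
  have hs : Summable (fun n : ℕ => (-1 : ℝ) ^ n * b n) := summable_alt hb
  have hshift : Summable (fun n : ℕ => (-1 : ℝ) ^ n * b (n + 1)) :=
    summable_alt ((summable_nat_add_iff 1).mpr hb)
  set S := ∑' n : ℕ, (-1 : ℝ) ^ n * b n with hS
  have h1 : ∑' n : ℕ, (-1 : ℝ) ^ n * b (n + 1) = b 0 - S := by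
    have := Summable.tsum_eq_zero_add hs
    simp only [pow_zero, one_mul] at this
    have h2 : ∑' n : ℕ, (-1 : ℝ) ^ (n + 1) * b (n + 1)
        = - ∑' n : ℕ, (-1 : ℝ) ^ n * b (n + 1) := by
      rw [← tsum_neg]
      congr 1; funext n; ring
    rw [h2] at this
    rw [← hS] at this
    linarith [this]
  have h3 : ∑' n : ℕ, (-1 : ℝ) ^ n * (Δ_[1] b) n
      = (∑' n : ℕ, (-1 : ℝ) ^ n * b (n + 1)) - S := by
    have : (fun n : ℕ => (-1 : ℝ) ^ n * (Δ_[1] b) n)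
        = fun n : ℕ => (-1 : ℝ) ^ n * b (n + 1) - (-1 : ℝ) ^ n * b n := by
      funext n; simp [fwdDiff]; ring
    rw [this, Summable.tsum_sub hshift hs]
  rw [h3, h1]
  ring

lemma iter_tsum {b : ℕ → ℝ} (hb : Summable b) (j : ℕ) :
    ∑' n : ℕ, (-1 : ℝ) ^ n * b n
      = (∑ i ∈ Finset.range j, (-1 : ℝ) ^ i * (2 : ℝ)⁻¹ ^ (i + 1) * ((Δ_[1])^[i] b) 0)
        + (-1 : ℝ) ^ j * (2 : ℝ)⁻¹ ^ j * ∑' n : ℕ, (-1 : ℝ) ^ n * ((Δ_[1])^[j] b) n := by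
  induction j with
  | zero => simp
  | succ j ih =>
    rw [ih, Finset.sum_range_succ]
    have hsum : Summable ((Δ_[1])^[j] b) := summable_fwdDiff_iter hb j
    have := step_tsum hsum
    rw [← Function.iterate_succ_apply' (Δ_[1]) j b] at this
    rw [this]
    ring

/-! ### Finite differences vs derivatives -/

lemma fwdDiff_comp_cast (f : ℝ → ℝ) :
    (Δ_[1]) (fun k : ℕ => f k) = fun k : ℕ => (Δ_[(1:ℝ)] f) k := by
  funext k
  simp [fwdDiff]

lemma fwdDiff_iter_comp_cast (f : ℝ → ℝ) (j : ℕ) :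
    ∀ n : ℕ, (Δ_[1])^[j] (fun k : ℕ => f k) n = (Δ_[(1:ℝ)])^[j] f n := by
  induction j generalizing f with
  | zero => intro n; simp
  | succ j ih =>
    intro n
    rw [Function.iterate_succ_apply, Function.iterate_succ_apply, fwdDiff_comp_cast]
    exact ih (Δ_[(1:ℝ)] f) n

/-- Iterated forward difference equals an iterated derivative at an intermediate point. -/
lemma fwdDiff_iter_eq_deriv (j : ℕ) :
    ∀ (Φ : ℕ → ℝ → ℝ), (∀ i x, HasDerivAt (Φ i) (Φ (i + 1) x) x) → ∀ x : ℝ,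
      ∃ ξ ∈ Set.Icc x (x + j), (Δ_[(1:ℝ)])^[j] (Φ 0) x = Φ j ξ := by
  induction j with
  | zero =>
    intro Φ hΦ x
    exact ⟨x, by simp, by simp⟩
  | succ j ih =>
    intro Φ hΦ x
    have hΨ : ∀ i y, HasDerivAt (fun z => Φ i (z + 1) - Φ i z)
        ((fun z => Φ (i+1) (z + 1) - Φ (i+1) z) y) y := by
      intro i y
      exact ((hΦ i (y + 1)).comp_add_const y 1).sub (hΦ i y)
    obtain ⟨ξ, hξ, heq⟩ := ih (fun i => fun z => Φ i (z + 1) - Φ i z) hΨ x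
    have hmvt : ∃ η ∈ Set.Ioo ξ (ξ + 1), Φ (j+1) η = (Φ j (ξ + 1) - Φ j ξ) / ((ξ + 1) - ξ) := by
      apply exists_hasDerivAt_eq_slope (Φ j) (Φ (j+1)) (by linarith)
      · exact fun y _ => (hΦ j y).continuousAt.continuousWithinAt
      · exact fun y _ => hΦ j y
    obtain ⟨η, hη, hval⟩ := hmvt
    refine ⟨η, ?_, ?_⟩
    · constructor
      · linarith [hξ.1, hη.1]
      · push_cast
        linarith [hξ.2, hη.2]
    · rw [Function.iterate_succ_apply]
      have hD : Δ_[(1:ℝ)] (Φ 0) = (fun i => fun z => Φ i (z + 1) - Φ i z) 0 := by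
        funext z; simp [fwdDiff]
      rw [hD, heq, hval]
      field_simp
      ring

/-! ### The Hermite-like polynomials -/

/-- Iterated "derivative" polynomials for `p(x) * exp(-t(x²+x)/2)`. -/
noncomputable def Wp (p : ℝ[X]) (t : ℝ) : ℕ → ℝ[X]
  | 0 => p
  | j + 1 => derivative (Wp p t j) - C t * (X + C (2⁻¹ : ℝ)) * Wp p t j

lemma Wp_zero (p : ℝ[X]) (t : ℝ) : Wp p t 0 = p := rfl

lemma Wp_succ (p : ℝ[X]) (t : ℝ) (j : ℕ) :
    Wp p t (j + 1) = derivative (Wp p t j) - C t * (X + C (2⁻¹ : ℝ)) * Wp p t j := rfl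

/-- The Gaussian-type factor. -/
noncomputable def Ee (t x : ℝ) : ℝ := Real.exp (-(t * (x ^ 2 + x)) / 2)

lemma Ee_pos (t x : ℝ) : 0 < Ee t x := Real.exp_pos _

lemma hasDerivAt_Ee (t x : ℝ) :
    HasDerivAt (Ee t) (-(t * (2 * x + 1)) / 2 * Ee t x) x := by
  have h3 : HasDerivAt (fun y : ℝ => y ^ 2 + y) (2 * x + 1) x := by
    exact ((hasDerivAt_pow 2 x).add (hasDerivAt_id' x)).congr_deriv (by norm_num)
  have h1 : HasDerivAt (fun y : ℝ => -(t * (y ^ 2 + y)) / 2) (-(t * (2 * x + 1)) / 2) x :=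
    ((h3.const_mul t).neg).div_const 2
  rw [show Ee t = fun x => Real.exp (-(t * (x ^ 2 + x)) / 2) from rfl]
  simpa [Ee, mul_comm] using h1.exp

lemma hasDerivAt_WE (p : ℝ[X]) (t : ℝ) (j : ℕ) (x : ℝ) :
    HasDerivAt (fun y => (Wp p t j).eval y * Ee t y)
      ((Wp p t (j + 1)).eval x * Ee t x) x := by
  have h1 : HasDerivAt (fun y => (Wp p t j).eval y) ((derivative (Wp p t j)).eval x) x :=
    (Wp p t j).hasDerivAt x
  have h2 := h1.mul (hasDerivAt_Ee t x)
  refine h2.congr_deriv ?_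
  rw [Wp_succ]
  simp only [eval_sub, eval_mul, eval_add, eval_C, eval_X]
  ring

lemma natDegree_Wp (p : ℝ[X]) (t : ℝ) (d : ℕ) (hd : p.natDegree ≤ d) :
    ∀ j, (Wp p t j).natDegree ≤ d + j := by
  intro j
  induction j with
  | zero => simpa [Wp_zero] using hd
  | succ j ih =>
    rw [Wp_succ]
    refine (natDegree_sub_le _ _).trans (max_le ?_ ?_)
    · exact (natDegree_derivative_le _).trans (by omega)
    · refine (natDegree_mul_le).trans ?_
      have h1 : (C t * (X + C (2⁻¹ : ℝ))).natDegree ≤ 1 := by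
        refine (natDegree_mul_le).trans ?_
        simp [natDegree_X_add_C]
      omega

/-- Coefficient growth constants. -/
noncomputable def Kc (p : ℝ[X]) (d : ℕ) : ℕ → ℝ
  | 0 => (∑ m ∈ Finset.range (d + 1), |p.coeff m|) + 1
  | j + 1 => ((d : ℝ) + j + 3) * Kc p d j

lemma Kc_zero (p : ℝ[X]) (d : ℕ) :
    Kc p d 0 = (∑ m ∈ Finset.range (d + 1), |p.coeff m|) + 1 := rfl

lemma Kc_succ (p : ℝ[X]) (d : ℕ) (j : ℕ) : Kc p d (j + 1) = ((d : ℝ) + j + 3) * Kc p d j := rfl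

lemma Kc_pos (p : ℝ[X]) (d : ℕ) : ∀ j, 0 < Kc p d j := by
  intro j
  induction j with
  | zero =>
    have h : (0:ℝ) ≤ ∑ m ∈ Finset.range (d + 1), |p.coeff m| :=
      Finset.sum_nonneg fun m _ => abs_nonneg _
    rw [Kc_zero]
    linarith
  | succ j ih =>
    rw [Kc_succ]
    have h2 : (0:ℝ) < (d : ℝ) + j + 3 := by positivity
    exact mul_pos h2 ih

lemma coeff_Wp_bound (p : ℝ[X]) (d : ℕ) (hd : p.natDegree ≤ d) {s : ℝ}
    (hs0 : 0 < s) (hs1 : s ≤ 1) :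
    ∀ j m, |(Wp p (s ^ 2) j).coeff m| ≤ Kc p d j * s ^ (j + m - d) := by
  set t := s ^ 2 with ht
  have hspow : ∀ a b : ℕ, b ≤ a → s ^ a ≤ s ^ b := fun a b hab =>
    pow_le_pow_of_le_one hs0.le hs1 hab
  have hspos : ∀ a : ℕ, 0 < s ^ a := fun a => pow_pos hs0 a
  intro j
  induction j with
  | zero =>
    intro m
    by_cases hm : m ≤ d
    · have h0 : (0 + m - d) = 0 := by omega
      rw [h0, pow_zero, mul_one, Wp_zero, Kc_zero]
      have : |p.coeff m| ≤ ∑ m ∈ Finset.range (d + 1), |p.coeff m| :=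
        Finset.single_le_sum (f := fun m => |p.coeff m|) (fun i _ => abs_nonneg _)
          (Finset.mem_range.mpr (by omega))
      linarith
    · have : p.coeff m = 0 := coeff_eq_zero_of_natDegree_lt (by omega)
      rw [show Wp p t 0 = p from rfl, this]
      simp only [abs_zero]
      exact mul_nonneg (Kc_pos p d 0).le (pow_pos hs0 _).le
  | succ j ih =>
    intro m
    have hW : (Wp p t (j+1)).coeff m
        = (Wp p t j).coeff (m+1) * (m+1) - t * ((X * Wp p t j).coeff m + 2⁻¹ * (Wp p t j).coeff m) := by
      rw [Wp_succ, coeff_sub, coeff_derivative]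
      have hcc : (C t * (X + C (2⁻¹:ℝ)) * Wp p t j).coeff m
          = t * ((X * Wp p t j).coeff m + 2⁻¹ * (Wp p t j).coeff m) := by
        rw [mul_assoc, coeff_C_mul, add_mul, coeff_add, coeff_C_mul]
      rw [hcc]
    rw [hW]
    have e : j + 1 + m - d ≤ j + (m + 1) - d := by omega
    -- derivative term
    have hA : |(Wp p t j).coeff (m+1) * (m+1)| ≤ ((d:ℝ) + j + 1) * (Kc p d j * s ^ (j + 1 + m - d)) := by
      by_cases hdeg : m + 1 ≤ (Wp p t j).natDegree
      · have hle := natDegree_Wp p t d hd j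
        have h1 := ih (m+1)
        have h2 : s ^ (j + (m+1) - d) ≤ s ^ (j + 1 + m - d) := hspow _ _ e
        rw [abs_mul]
        have hm1 : |((m:ℝ)+1)| ≤ (d:ℝ) + j + 1 := by
          rw [abs_of_nonneg (by positivity)]
          have h5 : m + 1 ≤ d + j := le_trans hdeg hle
          have h6 : ((m:ℝ)+1) ≤ (d:ℝ) + (j:ℝ) := by exact_mod_cast h5
          linarith
        calc |(Wp p t j).coeff (m+1)| * |((m:ℝ)+1)|
            ≤ (Kc p d j * s ^ (j + (m+1) - d)) * ((d:ℝ) + j + 1) := by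
              exact mul_le_mul h1 hm1 (abs_nonneg _)
                (mul_nonneg (Kc_pos p d j).le (hspos _).le)
          _ ≤ ((d:ℝ) + j + 1) * (Kc p d j * s ^ (j + 1 + m - d)) := by
              have hK := (Kc_pos p d j).le
              have := mul_le_mul_of_nonneg_left h2 hK
              nlinarith [this]
      · have : (Wp p t j).coeff (m+1) = 0 := coeff_eq_zero_of_natDegree_lt (by omega)
        rw [this]
        simp only [zero_mul, abs_zero]
        exact mul_nonneg (by positivity) (mul_nonneg (Kc_pos p d j).le (hspos _).le)
    -- X-mul term
    have hB : |t * (X * Wp p t j).coeff m| ≤ Kc p d j * s ^ (j + 1 + m - d) := by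
      rcases m with - | m'
      · rw [mul_coeff_zero]
        simp only [coeff_X_zero, zero_mul, mul_zero, abs_zero]
        exact mul_nonneg (Kc_pos p d j).le (hspos _).le
      · rw [coeff_X_mul]
        have h1 := ih m'
        have habs : |t * (Wp p t j).coeff m'| ≤ s^2 * (Kc p d j * s ^ (j + m' - d)) := by
          rw [abs_mul, ht, abs_of_nonneg (by positivity)]
          exact mul_le_mul_of_nonneg_left h1 (by positivity)
        refine habs.trans ?_
        have hcomb : s^2 * s ^ (j + m' - d) = s ^ (2 + (j + m' - d)) := by
          rw [pow_add]
        have hle2 : s ^ (2 + (j + m' - d)) ≤ s ^ (j + 1 + (m' + 1) - d) := hspow _ _ (by omega)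
        calc s^2 * (Kc p d j * s ^ (j + m' - d))
            = Kc p d j * s ^ (2 + (j + m' - d)) := by rw [← hcomb]; ring
          _ ≤ Kc p d j * s ^ (j + 1 + (m' + 1) - d) :=
              mul_le_mul_of_nonneg_left hle2 (Kc_pos p d j).le
    -- constant term
    have hC : |t * (2⁻¹ * (Wp p t j).coeff m)| ≤ Kc p d j * s ^ (j + 1 + m - d) := by
      have h1 := ih m
      have habs : |t * (2⁻¹ * (Wp p t j).coeff m)| ≤ s^2 * (Kc p d j * s ^ (j + m - d)) := by
        rw [abs_mul, abs_mul, ht, abs_of_nonneg (by positivity : (0:ℝ) ≤ s^2)]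
        have : |(2⁻¹ : ℝ)| * |(Wp p t j).coeff m| ≤ Kc p d j * s ^ (j + m - d) := by
          rw [abs_of_nonneg (by norm_num : (0:ℝ) ≤ 2⁻¹)]
          nlinarith [ih m, abs_nonneg ((Wp p t j).coeff m), (Kc_pos p d j).le, (hspos (j+m-d)).le]
        exact mul_le_mul_of_nonneg_left this (by positivity)
      refine habs.trans ?_
      have hcomb : s^2 * s ^ (j + m - d) = s ^ (2 + (j + m - d)) := by rw [pow_add]
      have hle2 : s ^ (2 + (j + m - d)) ≤ s ^ (j + 1 + m - d) := hspow _ _ (by omega)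
      calc s^2 * (Kc p d j * s ^ (j + m - d)) = Kc p d j * s ^ (2 + (j + m - d)) := by
            rw [← hcomb]; ring
        _ ≤ Kc p d j * s ^ (j + 1 + m - d) := mul_le_mul_of_nonneg_left hle2 (Kc_pos p d j).le
    have htri : |(Wp p t j).coeff (m+1) * (m+1) - t * ((X * Wp p t j).coeff m + 2⁻¹ * (Wp p t j).coeff m)|
        ≤ |(Wp p t j).coeff (m+1) * (m+1)| + |t * (X * Wp p t j).coeff m| + |t * (2⁻¹ * (Wp p t j).coeff m)| := by
      have h1 := abs_sub ((Wp p t j).coeff (m+1) * ((m:ℝ)+1)) (t * ((X * Wp p t j).coeff m + 2⁻¹ * (Wp p t j).coeff m))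
      have h2 : |t * ((X * Wp p t j).coeff m + 2⁻¹ * (Wp p t j).coeff m)|
          ≤ |t * (X * Wp p t j).coeff m| + |t * (2⁻¹ * (Wp p t j).coeff m)| := by
        rw [mul_add]
        exact abs_add_le _ _
      calc _ ≤ |(Wp p t j).coeff (m+1) * ((m:ℝ)+1)| + |t * ((X * Wp p t j).coeff m + 2⁻¹ * (Wp p t j).coeff m)| :=
            abs_sub _ _
        _ ≤ _ := by linarith
    show |(Wp p t j).coeff (m+1) * ((m:ℝ)+1) - t * ((X * Wp p t j).coeff m + 2⁻¹ * (Wp p t j).coeff m)|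
        ≤ Kc p d (j+1) * s ^ (j + 1 + m - d)
    have hK : Kc p d (j+1) = ((d:ℝ) + j + 3) * Kc p d j := rfl
    rw [hK]
    have := htri.trans (by linarith [hA, hB, hC] :
      |(Wp p t j).coeff (m+1) * ((m:ℝ)+1)| + |t * (X * Wp p t j).coeff m| + |t * (2⁻¹ * (Wp p t j).coeff m)|
        ≤ ((d:ℝ) + j + 1) * (Kc p d j * s ^ (j + 1 + m - d)) + Kc p d j * s ^ (j + 1 + m - d) + Kc p d j * s ^ (j + 1 + m - d))
    refine this.trans ?_
    have hKj := (Kc_pos p d j).le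
    have hsp := (hspos (j + 1 + m - d)).le
    nlinarith [mul_nonneg hKj hsp]

/-! ### Gaussian sum estimates -/

lemma cast_le_sq (n : ℕ) : (n:ℝ) ≤ (n:ℝ) ^ 2 := by
  rcases Nat.eq_zero_or_pos n with h | h
  · simp [h]
  · have h1 : (1:ℝ) ≤ n := by exact_mod_cast h
    nlinarith

lemma le_exp_pow (m : ℕ) (y : ℝ) (hy : 0 ≤ y) : y ^ m ≤ (m : ℝ) ^ m * Real.exp y := by
  rcases Nat.eq_zero_or_pos m with hm | hm
  · subst hm
    simpa using by linarith [Real.add_one_le_exp y]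
  · have hmR : (0:ℝ) < m := by exact_mod_cast hm
    have h1 : y / m ≤ Real.exp (y / m) := by
      linarith [Real.add_one_le_exp (y / m)]
    have h2 : (y / m) ^ m ≤ Real.exp (y / m) ^ m :=
      pow_le_pow_left₀ (by positivity) h1 m
    have h3 : Real.exp (y / m) ^ m = Real.exp y := by
      rw [← Real.exp_nat_mul]
      congr 1
      field_simp
    have h4 : y ^ m = (m : ℝ) ^ m * (y / m) ^ m := by
      rw [← mul_pow]
      congr 1
      field_simp
    rw [h4, ← h3]
    exact mul_le_mul_of_nonneg_left h2 (by positivity)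

/-- The pointwise Gaussian bound constant. -/
noncomputable def Am (m : ℕ) : ℝ := 2 ^ m * (2 + 4 ^ m * (m : ℝ) ^ m)

lemma Am_pos (m : ℕ) : 0 < Am m := by
  unfold Am
  positivity

lemma pt_bound (m : ℕ) (y : ℝ) (hy : 0 ≤ y) :
    (y + 1) ^ m * Real.exp (-(y ^ 2) / 4) ≤ Am m := by
  have hE : Real.exp (-(y ^ 2) / 4) ≤ 1 := by
    rw [Real.exp_le_one_iff]
    nlinarith
  have hEpos : 0 < Real.exp (-(y ^ 2) / 4) := Real.exp_pos _
  have hym : y ^ m * Real.exp (-(y ^ 2) / 4) ≤ 1 + 4 ^ m * (m : ℝ) ^ m := by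
    have hz : (0:ℝ) ≤ y ^ 2 / 4 := by positivity
    have h1 : (y ^ 2 / 4) ^ m ≤ (m : ℝ) ^ m * Real.exp (y ^ 2 / 4) := le_exp_pow m _ hz
    have h2 : y ^ (2 * m) = 4 ^ m * (y ^ 2 / 4) ^ m := by
      rw [div_pow, pow_mul]
      field_simp
    have h3 : y ^ m ≤ 1 + y ^ (2 * m) := by
      rcases le_total y 1 with hy1 | hy1
      · have : y ^ m ≤ 1 := pow_le_one₀ hy hy1
        have : (0:ℝ) ≤ y ^ (2*m) := by positivity
        linarith
      · have : y ^ m ≤ y ^ (2 * m) := pow_le_pow_right₀ hy1 (by omega)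
        linarith
    have h4 : y ^ (2*m) ≤ 4 ^ m * ((m : ℝ) ^ m * Real.exp (y ^ 2 / 4)) := by
      rw [h2]
      exact mul_le_mul_of_nonneg_left h1 (by positivity)
    have h5 : y ^ m * Real.exp (-(y ^ 2) / 4)
        ≤ (1 + 4 ^ m * ((m : ℝ) ^ m * Real.exp (y ^ 2 / 4))) * Real.exp (-(y ^ 2) / 4) := by
      apply mul_le_mul_of_nonneg_right _ hEpos.le
      linarith
    have h6 : Real.exp (y ^ 2 / 4) * Real.exp (-(y ^ 2) / 4) = 1 := by
      rw [← Real.exp_add, show y ^ 2 / 4 + -(y ^ 2) / 4 = 0 by ring, Real.exp_zero]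
    calc y ^ m * Real.exp (-(y ^ 2) / 4)
        ≤ (1 + 4 ^ m * ((m : ℝ) ^ m * Real.exp (y ^ 2 / 4))) * Real.exp (-(y ^ 2) / 4) := h5
      _ = Real.exp (-(y ^ 2) / 4) + 4 ^ m * (m:ℝ)^m * (Real.exp (y ^ 2 / 4) * Real.exp (-(y ^ 2) / 4)) := by ring
      _ = Real.exp (-(y ^ 2) / 4) + 4 ^ m * (m:ℝ)^m := by rw [h6]; ring
      _ ≤ 1 + 4 ^ m * (m:ℝ)^m := by linarith
  have hsplit : (y + 1) ^ m ≤ 2 ^ m * (1 + y ^ m) := by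
    rcases le_total y 1 with hy1 | hy1
    · have h1 : (y + 1) ^ m ≤ 2 ^ m := by
        apply pow_le_pow_left₀ (by linarith) (by linarith)
      have h2 : (0:ℝ) ≤ 2 ^ m * y ^ m := by positivity
      nlinarith
    · have h1 : (y + 1) ^ m ≤ (2 * y) ^ m := by
        apply pow_le_pow_left₀ (by linarith) (by linarith)
      rw [mul_pow] at h1
      have h2 : (0:ℝ) < 2 ^ m := by positivity
      nlinarith
  calc (y + 1) ^ m * Real.exp (-(y ^ 2) / 4)
      ≤ (2 ^ m * (1 + y ^ m)) * Real.exp (-(y ^ 2) / 4) :=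
        mul_le_mul_of_nonneg_right hsplit hEpos.le
    _ = 2 ^ m * (Real.exp (-(y ^ 2) / 4) + y ^ m * Real.exp (-(y ^ 2) / 4)) := by ring
    _ ≤ 2 ^ m * (1 + (1 + 4 ^ m * (m:ℝ)^m)) := by
        have h2 : (0:ℝ) < 2 ^ m := by positivity
        nlinarith
    _ = Am m := by unfold Am; ring

lemma gauss_term (m : ℕ) {s : ℝ} (hs0 : 0 < s) (hs1 : s ≤ 1) (n : ℕ) :
    ((n:ℝ) + 1) ^ m * Real.exp (-(s ^ 2 * (n:ℝ) ^ 2) / 4) ≤ Am m / s ^ m := by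
  rw [le_div_iff₀ (pow_pos hs0 m)]
  set y := s * (n : ℝ) with hy
  have hy0 : 0 ≤ y := by positivity
  have h1 : ((n:ℝ) + 1) ^ m * s ^ m = (y + s) ^ m := by
    rw [← mul_pow]
    congr 1
    ring
  have h2 : (y + s) ^ m ≤ (y + 1) ^ m := pow_le_pow_left₀ (by positivity) (by linarith) m
  have h3 : Real.exp (-(s ^ 2 * (n:ℝ) ^ 2) / 4) = Real.exp (-(y ^ 2) / 4) := by
    congr 1
    rw [hy]
    ring
  calc ((n:ℝ) + 1) ^ m * Real.exp (-(s ^ 2 * (n:ℝ) ^ 2) / 4) * s ^ m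
      = (((n:ℝ) + 1) ^ m * s ^ m) * Real.exp (-(y ^ 2) / 4) := by rw [h3]; ring
    _ = (y + s) ^ m * Real.exp (-(y ^ 2) / 4) := by rw [h1]
    _ ≤ (y + 1) ^ m * Real.exp (-(y ^ 2) / 4) :=
        mul_le_mul_of_nonneg_right h2 (Real.exp_pos _).le
    _ ≤ Am m := pt_bound m y hy0

lemma exp_quarter_le_geom {s : ℝ} (hs0 : 0 < s) (n : ℕ) :
    Real.exp (-(s ^ 2 * (n:ℝ) ^ 2) / 4) ≤ Real.exp (-(s ^ 2) / 4) ^ n := by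
  rw [← Real.exp_nat_mul]
  apply Real.exp_le_exp.mpr
  have hn : (n : ℝ) ≤ (n : ℝ) ^ 2 := cast_le_sq n
  nlinarith [sq_nonneg s]

lemma summable_exp_quarter {s : ℝ} (hs0 : 0 < s) :
    Summable (fun n : ℕ => Real.exp (-(s ^ 2 * (n:ℝ) ^ 2) / 4)) := by
  have hr1 : Real.exp (-(s ^ 2) / 4) < 1 := by
    rw [Real.exp_lt_one_iff]
    nlinarith [sq_nonneg s]
  exact Summable.of_nonneg_of_le (fun n => (Real.exp_pos _).le)
    (fun n => exp_quarter_le_geom hs0 n)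
    (summable_geometric_of_lt_one (Real.exp_pos _).le hr1)

lemma sum_exp_quarter {s : ℝ} (hs0 : 0 < s) (hs1 : s ≤ 1) :
    ∑' n : ℕ, Real.exp (-(s ^ 2 * (n:ℝ) ^ 2) / 4) ≤ 8 / s ^ 2 := by
  set r := Real.exp (-(s ^ 2) / 4) with hr
  have hr0 : 0 < r := Real.exp_pos _
  have hr1 : r < 1 := by
    rw [hr, Real.exp_lt_one_iff]
    nlinarith [sq_nonneg s]
  have h1 : ∑' n : ℕ, Real.exp (-(s ^ 2 * (n:ℝ) ^ 2) / 4) ≤ ∑' n : ℕ, r ^ n :=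
    Summable.tsum_le_tsum (fun n => exp_quarter_le_geom hs0 n) (summable_exp_quarter hs0)
      (summable_geometric_of_lt_one hr0.le hr1)
  rw [tsum_geometric_of_lt_one hr0.le hr1] at h1
  have hx0 : 0 < s ^ 2 / 4 := by positivity
  have hx1 : s ^ 2 / 4 ≤ 1 := by nlinarith
  have hexp : Real.exp (s ^ 2 / 4) ≥ 1 + s ^ 2 / 4 := by
    linarith [Real.add_one_le_exp (s ^ 2 / 4)]
  have hmul : r * Real.exp (s ^ 2 / 4) = 1 := by
    rw [hr, ← Real.exp_add, show -(s ^ 2) / 4 + s ^ 2 / 4 = 0 by ring, Real.exp_zero]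
  have hinv : r * (1 + s ^ 2 / 4) ≤ 1 := by nlinarith [hr0.le]
  have hlow : 1 - s ^ 2 / 4 ≤ r := by
    rw [hr]
    linarith [Real.add_one_le_exp (-(s ^ 2) / 4)]
  have h2 : s ^ 2 / 8 ≤ 1 - r := by nlinarith
  have h4 : (1 - r)⁻¹ ≤ 8 / s ^ 2 := by
    have h5 := one_div_le_one_div_of_le (by positivity : (0:ℝ) < s ^ 2 / 8) h2
    calc (1 - r)⁻¹ = 1 / (1 - r) := (one_div _).symm
      _ ≤ 1 / (s ^ 2 / 8) := h5
      _ = 8 / s ^ 2 := by field_simp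
  linarith

lemma summable_gauss (m : ℕ) {s : ℝ} (hs0 : 0 < s) :
    Summable (fun n : ℕ => ((n:ℝ) + 1) ^ m * Real.exp (-(s ^ 2 * (n:ℝ) ^ 2) / 2)) := by
  have hρ0 : 0 < Real.exp (-(s ^ 2) / 2) := Real.exp_pos _
  have hρ1 : Real.exp (-(s ^ 2) / 2) < 1 := by
    rw [Real.exp_lt_one_iff]; nlinarith [sq_nonneg s]
  refine Summable.of_nonneg_of_le (fun n => by positivity) (fun n => ?_)
    (summable_pow_mul_geom m hρ0 hρ1)
  have h1 : Real.exp (-(s ^ 2 * (n:ℝ) ^ 2) / 2) ≤ Real.exp (-(s ^ 2) / 2) ^ n := by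
    rw [← Real.exp_nat_mul]
    apply Real.exp_le_exp.mpr
    have hn : (n : ℝ) ≤ (n : ℝ) ^ 2 := cast_le_sq n
    nlinarith [sq_nonneg s]
  exact mul_le_mul_of_nonneg_left h1 (by positivity)

lemma gauss_sum (m : ℕ) {s : ℝ} (hs0 : 0 < s) (hs1 : s ≤ 1) :
    ∑' n : ℕ, ((n:ℝ) + 1) ^ m * Real.exp (-(s ^ 2 * (n:ℝ) ^ 2) / 2)
      ≤ (8 * Am m) / s ^ (m + 2) := by
  have hptw : ∀ n : ℕ, ((n:ℝ) + 1) ^ m * Real.exp (-(s ^ 2 * (n:ℝ) ^ 2) / 2)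
      ≤ (Am m / s ^ m) * Real.exp (-(s ^ 2 * (n:ℝ) ^ 2) / 4) := by
    intro n
    have hsplit : Real.exp (-(s ^ 2 * (n:ℝ) ^ 2) / 2)
        = Real.exp (-(s ^ 2 * (n:ℝ) ^ 2) / 4) * Real.exp (-(s ^ 2 * (n:ℝ) ^ 2) / 4) := by
      rw [← Real.exp_add]
      congr 1
      ring
    rw [hsplit, ← mul_assoc]
    exact mul_le_mul_of_nonneg_right (gauss_term m hs0 hs1 n) (Real.exp_pos _).le
  have h1 : ∑' n : ℕ, ((n:ℝ) + 1) ^ m * Real.exp (-(s ^ 2 * (n:ℝ) ^ 2) / 2)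
      ≤ ∑' n : ℕ, (Am m / s ^ m) * Real.exp (-(s ^ 2 * (n:ℝ) ^ 2) / 4) :=
    Summable.tsum_le_tsum hptw (summable_gauss m hs0) ((summable_exp_quarter hs0).mul_left _)
  rw [tsum_mul_left] at h1
  have h2 := sum_exp_quarter hs0 hs1
  have hA := (Am_pos m)
  have h3 : (Am m / s ^ m) * ∑' n : ℕ, Real.exp (-(s ^ 2 * (n:ℝ) ^ 2) / 4)
      ≤ (Am m / s ^ m) * (8 / s ^ 2) := by
    apply mul_le_mul_of_nonneg_left h2 (by positivity)
  have h4 : (Am m / s ^ m) * (8 / s ^ 2) = (8 * Am m) / s ^ (m + 2) := by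
    rw [pow_add]
    field_simp
  linarith


lemma eval_abs_le (p : ℝ[X]) (d : ℕ) (hd : p.natDegree ≤ d) (x : ℝ) (hx : 0 ≤ x) :
    |p.eval x| ≤ (∑ m ∈ Finset.range (d + 1), |p.coeff m|) * (x + 1) ^ d := by
  rw [eval_eq_sum_range' (Nat.lt_succ_of_le hd)]
  refine (Finset.abs_sum_le_sum_abs _ _).trans ?_
  rw [Finset.sum_mul]
  apply Finset.sum_le_sum
  intro m hm
  rw [abs_mul, abs_pow, abs_of_nonneg hx]
  have h2 : x ^ m ≤ (x + 1) ^ d := by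
    calc x ^ m ≤ (x + 1) ^ m := pow_le_pow_left₀ hx (by linarith) m
      _ ≤ (x + 1) ^ d := pow_le_pow_right₀ (by linarith)
          (Nat.lt_succ_iff.mp (Finset.mem_range.mp hm))
  exact mul_le_mul_of_nonneg_left h2 (abs_nonneg _)

/-! ### Remainder bound -/

lemma summable_pcoeff (p : ℝ[X]) (d : ℕ) (hd : p.natDegree ≤ d) {q : ℝ}
    (hq0 : 0 < q) (hq1 : q < 1) :
    Summable (fun k : ℕ => p.eval (k:ℝ) * q ^ T k) := by
  set CP := ∑ m ∈ Finset.range (d + 1), |p.coeff m| with hCP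
  have habs : ∀ k : ℕ, |p.eval (k:ℝ) * q ^ T k| ≤ CP * (((k:ℝ) + 1) ^ d * q ^ T k) := by
    intro k
    rw [abs_mul, abs_of_nonneg (pow_nonneg hq0.le _)]
    have h1 : |p.eval (k:ℝ)| ≤ CP * ((k:ℝ) + 1) ^ d := by
      exact eval_abs_le p d hd (k:ℝ) (Nat.cast_nonneg k)
    have h2 : (0:ℝ) ≤ q ^ T k := pow_nonneg hq0.le _
    calc |p.eval (k:ℝ)| * q ^ T k ≤ (CP * ((k:ℝ) + 1) ^ d) * q ^ T k :=
          mul_le_mul_of_nonneg_right h1 h2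
      _ = CP * (((k:ℝ) + 1) ^ d * q ^ T k) := by ring
  refine Summable.of_abs (Summable.of_nonneg_of_le (fun k => abs_nonneg _) habs ?_)
  exact (summable_T d hq0 hq1).mul_left CP

lemma remainder_est (p : ℝ[X]) (d : ℕ) (hd : p.natDegree ≤ d) :
    ∃ C : ℝ, 0 < C ∧ ∀ q : ℝ, 0 < q → q < 1 → -Real.log q ≤ 1 →
      |∑' n : ℕ, (-1:ℝ)^n * ((Δ_[1])^[d+3] (fun k : ℕ => p.eval (k:ℝ) * q ^ T k)) n|
        ≤ C * Real.sqrt (-Real.log q) := by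
  set j := d + 3 with hjdef
  refine ⟨∑ m ∈ Finset.range (d + j + 1),
      Kc p d j * (((d:ℝ)+3)+1)^m * (8 * Am m), ?_, ?_⟩
  · apply Finset.sum_pos
    · intro m _
      have h1 := Kc_pos p d j
      have h2 := Am_pos m
      positivity
    · exact ⟨0, Finset.mem_range.mpr (by omega)⟩
  intro q hq0 hq1 hql
  set t := -Real.log q with htdef
  have ht0 : 0 < t := by
    rw [htdef]
    have := Real.log_neg hq0 hq1
    linarith
  set s := Real.sqrt t with hsdef
  have hs0 : 0 < s := Real.sqrt_pos.mpr ht0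
  have hs1 : s ≤ 1 := by
    rw [hsdef, show (1:ℝ) = Real.sqrt 1 by simp]
    exact Real.sqrt_le_sqrt hql
  have hts : t = s ^ 2 := (Real.sq_sqrt ht0.le).symm
  have hqexp : ∀ k : ℕ, q ^ T k = Ee t k := by
    intro k
    have hq : q = Real.exp (-t) := by
      rw [htdef, neg_neg, Real.exp_log hq0]
    rw [hq, ← Real.exp_nat_mul, Ee]
    congr 1
    rw [T_cast]
    ring
  set Φ : ℕ → ℝ → ℝ := fun i => fun x => (Wp p t i).eval x * Ee t x with hΦdef
  have hΦ : ∀ i x, HasDerivAt (Φ i) (Φ (i+1) x) x := fun i x => hasDerivAt_WE p t i x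
  have hbfun : (fun k : ℕ => p.eval (k:ℝ) * q ^ T k) = fun k : ℕ => Φ 0 (k:ℝ) := by
    funext k
    rw [hΦdef]
    simp only [Wp_zero]
    rw [hqexp k]
  set Bnd : ℕ → ℝ := fun n =>
    (∑ m ∈ Finset.range (d + j + 1), Kc p d j * s ^ (m+3) * ((n:ℝ) + j) ^ m)
      * Real.exp (-(s ^ 2 * (n:ℝ) ^ 2) / 2) with hBnddef
  have hBnd_nonneg : ∀ n, 0 ≤ Bnd n := by
    intro n
    rw [hBnddef]
    apply mul_nonneg _ (Real.exp_pos _).le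
    apply Finset.sum_nonneg
    intro m _
    have h1 := (Kc_pos p d j).le
    positivity
  have hptw : ∀ n : ℕ, |((Δ_[1])^[j] (fun k : ℕ => p.eval (k:ℝ) * q ^ T k)) n| ≤ Bnd n := by
    intro n
    rw [hbfun, fwdDiff_iter_comp_cast (Φ 0) j n]
    obtain ⟨ξ, hξmem, hξ⟩ := fwdDiff_iter_eq_deriv j Φ hΦ (n:ℝ)
    rw [hξ]
    have hn0 : (0:ℝ) ≤ (n:ℝ) := Nat.cast_nonneg n
    have hξ0 : (0:ℝ) ≤ ξ := le_trans hn0 hξmem.1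
    have hξle : ξ ≤ (n:ℝ) + j := hξmem.2
    have hdeglt : (Wp p t j).natDegree < d + j + 1 :=
      Nat.lt_succ_of_le (natDegree_Wp p t d hd j)
    have heval : |(Wp p t j).eval ξ|
        ≤ ∑ m ∈ Finset.range (d + j + 1), Kc p d j * s ^ (m+3) * ((n:ℝ) + j) ^ m := by
      rw [eval_eq_sum_range' hdeglt]
      refine (Finset.abs_sum_le_sum_abs _ _).trans (Finset.sum_le_sum ?_)
      intro m _
      rw [abs_mul, abs_pow, abs_of_nonneg hξ0]
      have h1 : |(Wp p t j).coeff m| ≤ Kc p d j * s ^ (m+3) := by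
        have h2 := coeff_Wp_bound p d hd hs0 hs1 j m
        rw [← hts] at h2
        rw [show j + m - d = m + 3 by omega] at h2
        exact h2
      have h2 : ξ ^ m ≤ ((n:ℝ) + j) ^ m := pow_le_pow_left₀ hξ0 hξle m
      exact mul_le_mul h1 h2 (pow_nonneg hξ0 m)
        (mul_nonneg (Kc_pos p d j).le (pow_pos hs0 _).le)
    have hEe : Ee t ξ ≤ Real.exp (-(s ^ 2 * (n:ℝ) ^ 2) / 2) := by
      rw [Ee]
      apply Real.exp_le_exp.mpr
      have hn : (n:ℝ) ≤ ξ := hξmem.1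
      have hsq : (n:ℝ) ^ 2 ≤ ξ ^ 2 := by nlinarith
      rw [hts]
      nlinarith [mul_le_mul_of_nonneg_left hsq (sq_nonneg s), mul_nonneg (sq_nonneg s) hξ0]
    have hfin : |Φ j ξ| = |(Wp p t j).eval ξ| * Ee t ξ := by
      rw [hΦdef]
      rw [abs_mul, abs_of_pos (Ee_pos t ξ)]
    rw [hfin, hBnddef]
    apply mul_le_mul heval hEe (Ee_pos t ξ).le
    apply Finset.sum_nonneg
    intro m _
    have h1 := (Kc_pos p d j).le
    positivity
  -- summability facts
  have hsumb : Summable (fun k : ℕ => p.eval (k:ℝ) * q ^ T k) := summable_pcoeff p d hd hq0 hq1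
  have hsumD : Summable ((Δ_[1])^[j] (fun k : ℕ => p.eval (k:ℝ) * q ^ T k)) :=
    summable_fwdDiff_iter hsumb j
  have hnj : ∀ (m : ℕ) (n : ℕ), ((n:ℝ) + j) ^ m ≤ ((j:ℝ)+1) ^ m * ((n:ℝ)+1) ^ m := by
    intro m n
    rw [← mul_pow]
    apply pow_le_pow_left₀ (by positivity)
    nlinarith [Nat.cast_nonneg (α := ℝ) n, Nat.cast_nonneg (α := ℝ) j]
  have hsum_m : ∀ m : ℕ, Summable (fun n : ℕ => ((n:ℝ) + j) ^ m * Real.exp (-(s ^ 2 * (n:ℝ) ^ 2) / 2)) := by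
    intro m
    refine Summable.of_nonneg_of_le (fun n => by positivity) (fun n => ?_)
      ((summable_gauss m hs0).mul_left (((j:ℝ)+1) ^ m))
    have := mul_le_mul_of_nonneg_right (hnj m n) (Real.exp_pos (-(s ^ 2 * (n:ℝ) ^ 2) / 2)).le
    calc ((n:ℝ) + j) ^ m * Real.exp (-(s ^ 2 * (n:ℝ) ^ 2) / 2)
        ≤ ((j:ℝ)+1) ^ m * ((n:ℝ)+1) ^ m * Real.exp (-(s ^ 2 * (n:ℝ) ^ 2) / 2) := this
      _ = ((j:ℝ)+1) ^ m * (((n:ℝ)+1) ^ m * Real.exp (-(s ^ 2 * (n:ℝ) ^ 2) / 2)) := by ring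
  have hsumBnd : Summable Bnd := by
    have : Bnd = fun (n : ℕ) => ∑ m ∈ Finset.range (d + j + 1),
        (Kc p d j * s ^ (m+3)) * (((n:ℝ) + j) ^ m * Real.exp (-(s ^ 2 * (n:ℝ) ^ 2) / 2)) := by
      funext n
      simp only [hBnddef]
      rw [Finset.sum_mul]
      apply Finset.sum_congr rfl
      intro m _
      ring
    rw [this]
    apply summable_sum
    intro m _
    exact (hsum_m m).mul_left _
  -- main chain
  have habs1 : |∑' n : ℕ, (-1:ℝ)^n * ((Δ_[1])^[j] (fun k : ℕ => p.eval (k:ℝ) * q ^ T k)) n|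
      ≤ ∑' n : ℕ, |((Δ_[1])^[j] (fun k : ℕ => p.eval (k:ℝ) * q ^ T k)) n| := by
    have h1 : Summable (fun n : ℕ => ‖(-1:ℝ)^n * ((Δ_[1])^[j] (fun k : ℕ => p.eval (k:ℝ) * q ^ T k)) n‖) := by
      refine hsumD.abs.congr fun n => ?_
      simp [Real.norm_eq_abs, abs_mul, abs_pow]
    have h2 := norm_tsum_le_tsum_norm h1
    rw [Real.norm_eq_abs] at h2
    refine h2.trans (le_of_eq ?_)
    apply tsum_congr
    intro n
    simp [Real.norm_eq_abs, abs_mul, abs_pow]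
  have habs2 : ∑' n : ℕ, |((Δ_[1])^[j] (fun k : ℕ => p.eval (k:ℝ) * q ^ T k)) n|
      ≤ ∑' n : ℕ, Bnd n :=
    Summable.tsum_le_tsum hptw hsumD.abs hsumBnd
  have hfinal : ∑' n : ℕ, Bnd n
      ≤ (∑ m ∈ Finset.range (d + j + 1), Kc p d j * (((j:ℝ))+1)^m * (8 * Am m)) * s := by
    have hrw : ∑' n : ℕ, Bnd n = ∑ m ∈ Finset.range (d + j + 1),
        (Kc p d j * s ^ (m+3)) * ∑' n : ℕ, (((n:ℝ) + j) ^ m * Real.exp (-(s ^ 2 * (n:ℝ) ^ 2) / 2)) := by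
      have h1 : Bnd = fun (n : ℕ) => ∑ m ∈ Finset.range (d + j + 1),
          (Kc p d j * s ^ (m+3)) * (((n:ℝ) + j) ^ m * Real.exp (-(s ^ 2 * (n:ℝ) ^ 2) / 2)) := by
        funext n
        simp only [hBnddef]
        rw [Finset.sum_mul]
        apply Finset.sum_congr rfl
        intro m _
        ring
      rw [h1, Summable.tsum_finsetSum (fun m _ => ((hsum_m m).mul_left _))]
      apply Finset.sum_congr rfl
      intro m _
      rw [tsum_mul_left]
    rw [hrw, Finset.sum_mul]
    apply Finset.sum_le_sum
    intro m _
    have hterm : ∑' n : ℕ, (((n:ℝ) + j) ^ m * Real.exp (-(s ^ 2 * (n:ℝ) ^ 2) / 2))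
        ≤ ((j:ℝ)+1) ^ m * ((8 * Am m) / s ^ (m + 2)) := by
      have h1 : ∑' n : ℕ, (((n:ℝ) + j) ^ m * Real.exp (-(s ^ 2 * (n:ℝ) ^ 2) / 2))
          ≤ ∑' n : ℕ, ((j:ℝ)+1) ^ m * (((n:ℝ)+1) ^ m * Real.exp (-(s ^ 2 * (n:ℝ) ^ 2) / 2)) := by
        apply Summable.tsum_le_tsum _ (hsum_m m) ((summable_gauss m hs0).mul_left _)
        intro n
        have := mul_le_mul_of_nonneg_right (hnj m n) (Real.exp_pos (-(s ^ 2 * (n:ℝ) ^ 2) / 2)).le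
        calc ((n:ℝ) + j) ^ m * Real.exp (-(s ^ 2 * (n:ℝ) ^ 2) / 2)
            ≤ ((j:ℝ)+1) ^ m * ((n:ℝ)+1) ^ m * Real.exp (-(s ^ 2 * (n:ℝ) ^ 2) / 2) := this
          _ = ((j:ℝ)+1) ^ m * (((n:ℝ)+1) ^ m * Real.exp (-(s ^ 2 * (n:ℝ) ^ 2) / 2)) := by ring
      rw [tsum_mul_left] at h1
      refine h1.trans ?_
      exact mul_le_mul_of_nonneg_left (gauss_sum m hs0 hs1) (by positivity)
    have hKpos := (Kc_pos p d j).le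
    have hs3 : (0:ℝ) < s ^ (m+3) := pow_pos hs0 _
    have hstep : (Kc p d j * s ^ (m+3)) * (((j:ℝ)+1) ^ m * ((8 * Am m) / s ^ (m + 2)))
        = Kc p d j * (((j:ℝ))+1)^m * (8 * Am m) * s := by
      have hsne : s ≠ 0 := hs0.ne'
      field_simp
      ring
    calc (Kc p d j * s ^ (m+3)) * ∑' n : ℕ, (((n:ℝ) + j) ^ m * Real.exp (-(s ^ 2 * (n:ℝ) ^ 2) / 2))
        ≤ (Kc p d j * s ^ (m+3)) * (((j:ℝ)+1) ^ m * ((8 * Am m) / s ^ (m + 2))) := by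
          apply mul_le_mul_of_nonneg_left hterm (by positivity)
      _ = Kc p d j * (((j:ℝ))+1)^m * (8 * Am m) * s := hstep
  have hcast : ((j:ℝ)) = ((d:ℝ)+3) := by
    rw [hjdef]
    push_cast
    ring
  calc |∑' n : ℕ, (-1:ℝ)^n * ((Δ_[1])^[j] (fun k : ℕ => p.eval (k:ℝ) * q ^ T k)) n|
      ≤ ∑' n : ℕ, Bnd n := habs1.trans habs2
    _ ≤ (∑ m ∈ Finset.range (d + j + 1), Kc p d j * (((j:ℝ))+1)^m * (8 * Am m)) * s := hfinal
    _ = (∑ m ∈ Finset.range (d + j + 1),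
          Kc p d j * (((d:ℝ)+3)+1)^m * (8 * Am m)) * Real.sqrt (-Real.log q) := by
        rw [← hsdef, hcast]

/-! ### Main-term limits and the master theorem -/

lemma tendsto_fwdDiff_iter (c : ℕ → ℝ) (i : ℕ) :
    ∀ n : ℕ, Tendsto (fun q : ℝ => ((Δ_[1])^[i] (fun k : ℕ => c k * q ^ T k)) n) (𝓝[<] 1)
      (𝓝 (((Δ_[1])^[i] c) n)) := by
  induction i with
  | zero =>
    intro n
    simp only [Function.iterate_zero, id]
    have h1 : Tendsto (fun q : ℝ => c n * q ^ T n) (𝓝 1) (𝓝 (c n * 1 ^ T n)) :=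
      ((continuous_pow (T n)).tendsto 1).const_mul _
    rw [one_pow, mul_one] at h1
    exact h1.mono_left nhdsWithin_le_nhds
  | succ i ih =>
    intro n
    have hrw : ∀ (b : ℕ → ℝ) (n : ℕ),
        ((Δ_[1])^[i+1] b) n = ((Δ_[1])^[i] b) (n+1) - ((Δ_[1])^[i] b) n := by
      intro b n
      rw [Function.iterate_succ_apply']
      rfl
    have h2 := (ih (n+1)).sub (ih n)
    rw [← hrw c n] at h2
    refine h2.congr fun q => ?_
    rw [← hrw]

theorem master (p : ℝ[X]) (d : ℕ) (hd : p.natDegree ≤ d) (c : ℕ → ℝ)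
    (hc : ∀ n : ℕ, p.eval (n:ℝ) = c n) :
    Tendsto (fun q : ℝ => ∑' n : ℕ, (-1:ℝ)^n * c n * q ^ T n) (𝓝[<] 1)
      (𝓝 (∑ i ∈ Finset.range (d+3), (-1:ℝ)^i * (2:ℝ)⁻¹^(i+1) * ((Δ_[1])^[i] c) 0)) := by
  obtain ⟨C, hC0, hCb⟩ := remainder_est p d hd
  set j := d + 3 with hjdef
  have hev : ∀ᶠ q in 𝓝[<] (1:ℝ), q ∈ Set.Ioo (Real.exp (-1)) 1 := by
    apply Ioo_mem_nhdsLT_of_mem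
    constructor
    · exact Real.exp_lt_one_iff.mpr (by norm_num)
    · exact le_refl 1
  have hkey : ∀ q ∈ Set.Ioo (Real.exp (-1)) (1:ℝ),
      ∑' n : ℕ, (-1:ℝ)^n * c n * q ^ T n
        = (∑ i ∈ Finset.range j, (-1:ℝ)^i * (2:ℝ)⁻¹^(i+1)
            * ((Δ_[1])^[i] (fun k : ℕ => c k * q ^ T k)) 0)
          + (-1:ℝ)^j * (2:ℝ)⁻¹^j
            * ∑' n : ℕ, (-1:ℝ)^n * ((Δ_[1])^[j] (fun k : ℕ => c k * q ^ T k)) n := by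
    intro q hq
    have hq0 : 0 < q := lt_trans (Real.exp_pos _) hq.1
    have hb : Summable (fun k : ℕ => c k * q ^ T k) := by
      refine (summable_pcoeff p d hd hq0 hq.2).congr fun k => by rw [hc]
    have h1 := iter_tsum hb j
    have h2 : ∑' n : ℕ, (-1:ℝ)^n * c n * q ^ T n
        = ∑' n : ℕ, (-1:ℝ)^n * (c n * q ^ T n) := by
      apply tsum_congr
      intro n
      ring
    rw [h2, h1]
  have hmain : Tendsto (fun q : ℝ => ∑ i ∈ Finset.range j, (-1:ℝ)^i * (2:ℝ)⁻¹^(i+1)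
      * ((Δ_[1])^[i] (fun k : ℕ => c k * q ^ T k)) 0) (𝓝[<] 1)
      (𝓝 (∑ i ∈ Finset.range j, (-1:ℝ)^i * (2:ℝ)⁻¹^(i+1) * ((Δ_[1])^[i] c) 0)) := by
    apply tendsto_finset_sum
    intro i _
    exact (tendsto_fwdDiff_iter c i 0).const_mul _
  have hrem : Tendsto (fun q : ℝ => ∑' n : ℕ, (-1:ℝ)^n
      * ((Δ_[1])^[j] (fun k : ℕ => c k * q ^ T k)) n) (𝓝[<] 1) (𝓝 0) := by
    apply squeeze_zero_norm' (a := fun q : ℝ => C * Real.sqrt (-Real.log q))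
    · filter_upwards [hev] with q hq
      have hq0 : 0 < q := lt_trans (Real.exp_pos _) hq.1
      have hlog : -Real.log q ≤ 1 := by
        have h3 : Real.log (Real.exp (-1)) ≤ Real.log q :=
          Real.log_le_log (Real.exp_pos _) hq.1.le
        rw [Real.log_exp] at h3
        linarith
      have hfun : (fun k : ℕ => c k * q ^ T k) = (fun k : ℕ => p.eval (k:ℝ) * q ^ T k) :=
        funext fun k => by rw [hc]
      rw [Real.norm_eq_abs, hfun]
      exact hCb q hq0 hq.2 hlog
    · have h1 : Tendsto (fun q : ℝ => Real.log q) (𝓝[<] 1) (𝓝 0) := by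
        have h2 := (Real.continuousAt_log (one_ne_zero)).tendsto
        rw [Real.log_one] at h2
        exact h2.mono_left nhdsWithin_le_nhds
      have h3 := h1.neg
      rw [neg_zero] at h3
      have h4 := (Real.continuous_sqrt.tendsto 0).comp h3
      rw [Real.sqrt_zero] at h4
      have h5 := h4.const_mul C
      rw [mul_zero] at h5
      exact h5
  have hcomb := hmain.add (hrem.const_mul ((-1:ℝ)^j * (2:ℝ)⁻¹^j))
  rw [mul_zero, add_zero] at hcomb
  refine Tendsto.congr' ?_ hcomb
  filter_upwards [hev] with q hq
  rw [hkey q hq]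

/-! ### The concrete series -/

noncomputable def SF (c : ℕ → ℝ) (q : ℝ) : ℝ := ∑' n : ℕ, (-1:ℝ)^n * c n * q ^ T n

noncomputable def c₀ : ℕ → ℝ := fun _ => 1
noncomputable def c₁ : ℕ → ℝ := fun n => (T n : ℝ)
noncomputable def c₂ : ℕ → ℝ := fun n => ((T n : ℝ))^2

lemma SF_congr {c c' : ℕ → ℝ} (h : ∀ n, c n = c' n) : SF c = SF c' := by
  funext q
  exact tsum_congr fun n => by rw [h]

lemma T_le_sq (n : ℕ) : (T n : ℝ) ≤ ((n:ℝ)+1)^2 := by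
  rw [T_cast]
  nlinarith [Nat.cast_nonneg (α := ℝ) n]

lemma hasDerivAt_SF (c : ℕ → ℝ) (k : ℕ) (hc : ∀ n, |c n| ≤ ((n:ℝ)+1)^k) {q : ℝ}
    (hq0 : 0 < q) (hq1 : q < 1) :
    HasDerivAt (SF c) (q⁻¹ * SF (fun n => c n * (T n : ℝ)) q) q := by
  set r := (1+q)/2 with hr
  have h0r : 0 < r := by rw [hr]; linarith
  have hr1 : r < 1 := by rw [hr]; linarith
  have hqr : q < r := by rw [hr]; linarith
  have hqmem : q ∈ Set.Ioo (-r) r := ⟨by linarith, hqr⟩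
  have hu : Summable (fun n : ℕ => ((n:ℝ)+1)^(k+2) * r^(T n - 1)) :=
    summable_T_pred (k+2) h0r hr1
  have hg : ∀ (n : ℕ) (y : ℝ), y ∈ Set.Ioo (-r) r →
      HasDerivAt (fun z : ℝ => (-1:ℝ)^n * c n * z ^ T n)
        (((-1:ℝ)^n * c n) * ((T n : ℝ) * y ^ (T n - 1))) y := by
    intro n y _
    exact (hasDerivAt_pow (T n) y).const_mul _
  have hg' : ∀ (n : ℕ) (y : ℝ), y ∈ Set.Ioo (-r) r →
      ‖((-1:ℝ)^n * c n) * ((T n : ℝ) * y ^ (T n - 1))‖ ≤ ((n:ℝ)+1)^(k+2) * r^(T n - 1) := by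
    intro n y hy
    have h1 : |(-1:ℝ)^n| = 1 := by rw [abs_pow]; norm_num
    have hyr : |y| ≤ r := le_of_lt (abs_lt.mpr ⟨hy.1, hy.2⟩)
    have hyp : |y| ^ (T n - 1) ≤ r ^ (T n - 1) := pow_le_pow_left₀ (abs_nonneg y) hyr _
    have hT : |(T n : ℝ)| ≤ ((n:ℝ)+1)^2 := by
      rw [abs_of_nonneg (Nat.cast_nonneg _)]
      exact T_le_sq n
    simp only [Real.norm_eq_abs, abs_mul, abs_pow, abs_neg, abs_one, one_pow, one_mul]
    calc |c n| * (|(T n : ℝ)| * |y| ^ (T n - 1))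
        ≤ ((n:ℝ)+1)^k * (((n:ℝ)+1)^2 * r ^ (T n - 1)) := by
          apply mul_le_mul (hc n) _ (mul_nonneg (abs_nonneg _) (pow_nonneg (abs_nonneg _) _))
            (by positivity)
          exact mul_le_mul hT hyp (pow_nonneg (abs_nonneg _) _) (by positivity)
      _ = ((n:ℝ)+1)^(k+2) * r^(T n - 1) := by rw [pow_add]; ring
  have hg0 : Summable (fun n : ℕ => (-1:ℝ)^n * c n * q ^ T n) := by
    refine Summable.of_abs (Summable.of_nonneg_of_le (fun n => abs_nonneg _)
      (fun n => ?_) (summable_T k hq0 hq1))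
    have h1 : |(-1:ℝ)^n| = 1 := by rw [abs_pow]; norm_num
    rw [abs_mul, abs_mul, h1, one_mul, abs_pow, abs_of_pos hq0]
    exact mul_le_mul_of_nonneg_right (hc n) (pow_nonneg hq0.le _)
  have key := hasDerivAt_tsum_of_isPreconnected hu isOpen_Ioo isPreconnected_Ioo
    hg hg' hqmem hg0 hqmem
  have hval : ∑' n : ℕ, ((-1:ℝ)^n * c n) * ((T n : ℝ) * q ^ (T n - 1))
      = q⁻¹ * SF (fun n => c n * (T n : ℝ)) q := by
    rw [SF, ← tsum_mul_left]
    apply tsum_congr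
    intro n
    rcases Nat.eq_zero_or_pos (T n) with h | h
    · rw [h]
      simp
    · have hpow : q ^ T n = q ^ (T n - 1) * q := by
        rw [← pow_succ]
        congr 1
        omega
      rw [hpow]
      have hq : q ≠ 0 := hq0.ne'
      field_simp
  rw [← hval]
  exact key

lemma abs_c₀_le : ∀ n : ℕ, |c₀ n| ≤ ((n:ℝ)+1)^0 := by
  intro n
  simp [c₀]

lemma abs_c₁_le : ∀ n : ℕ, |c₁ n| ≤ ((n:ℝ)+1)^2 := by
  intro n
  rw [show c₁ n = (T n : ℝ) from rfl, abs_of_nonneg (Nat.cast_nonneg _)]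
  exact T_le_sq n

lemma hasDerivAt_SF₀ {q : ℝ} (hq0 : 0 < q) (hq1 : q < 1) :
    HasDerivAt (SF c₀) (q⁻¹ * SF c₁ q) q := by
  have h := hasDerivAt_SF c₀ 0 abs_c₀_le hq0 hq1
  rwa [SF_congr (fun n => by simp [c₀, c₁] : ∀ n, (c₀ n * (T n : ℝ)) = c₁ n)] at h

lemma hasDerivAt_SF₁ {q : ℝ} (hq0 : 0 < q) (hq1 : q < 1) :
    HasDerivAt (SF c₁) (q⁻¹ * SF c₂ q) q := by
  have h := hasDerivAt_SF c₁ 2 abs_c₁_le hq0 hq1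
  rwa [SF_congr (fun n => by simp [c₁, c₂]; ring : ∀ n, (c₁ n * (T n : ℝ)) = c₂ n)] at h

lemma hf0eq : f₀ = fun q : ℝ => q⁻¹ * SF c₀ q := by
  funext q
  unfold f₀ SF c₀ T
  congr 1
  exact tsum_congr fun n => by ring

/-- First derivative candidate. -/
noncomputable def Gd : ℝ → ℝ := fun q => q⁻¹ * q⁻¹ * (SF c₁ q - SF c₀ q)

/-- Second derivative candidate. -/
noncomputable def Hd : ℝ → ℝ :=
  fun q => q⁻¹ * q⁻¹ * q⁻¹ * (SF c₂ q - 3 * SF c₁ q + 2 * SF c₀ q)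

lemma hasDerivAt_f₀ {q : ℝ} (hq0 : 0 < q) (hq1 : q < 1) : HasDerivAt f₀ (Gd q) q := by
  have h1 := (hasDerivAt_inv hq0.ne').mul (hasDerivAt_SF₀ hq0 hq1)
  rw [hf0eq]
  refine h1.congr_deriv ?_
  have hq : q ≠ 0 := hq0.ne'
  unfold Gd
  field_simp
  ring

lemma hasDerivAt_Gd {q : ℝ} (hq0 : 0 < q) (hq1 : q < 1) : HasDerivAt Gd (Hd q) q := by
  have hinv2 := (hasDerivAt_inv hq0.ne').mul (hasDerivAt_inv hq0.ne')
  have hdiff := (hasDerivAt_SF₁ hq0 hq1).sub (hasDerivAt_SF₀ hq0 hq1)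
  have h := hinv2.mul hdiff
  refine h.congr_deriv ?_
  have hq : q ≠ 0 := hq0.ne'
  unfold Hd
  simp only [Pi.mul_apply, Pi.sub_apply]
  field_simp
  ring

/-! ### The three limits -/

lemma tendsto_SF₀ : Tendsto (SF c₀) (𝓝[<] (1:ℝ)) (𝓝 (1/2)) := by
  have hm := master 1 0 (by simp) c₀ (fun n => by simp [c₀])
  have hval : (∑ i ∈ Finset.range (0+3), (-1:ℝ)^i * (2:ℝ)⁻¹^(i+1) * ((Δ_[1])^[i] c₀) 0)
      = 1/2 := by
    simp only [fwdDiff_iter_eq_sum_shift]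
    norm_num [Finset.sum_range_succ, c₀, T, Nat.choose]
  rw [hval] at hm
  exact hm

lemma tendsto_SF₁ : Tendsto (SF c₁) (𝓝[<] (1:ℝ)) (𝓝 (-(1/8))) := by
  have hdeg : (C (1/2:ℝ) * (X^2 + X)).natDegree ≤ 2 := by
    refine (natDegree_mul_le).trans ?_
    have h1 : (X^2 + X : ℝ[X]).natDegree ≤ 2 :=
      (natDegree_add_le _ _).trans (by simp [natDegree_X_pow, natDegree_X])
    simp only [natDegree_C]
    omega
  have hc : ∀ n : ℕ, (C (1/2:ℝ) * (X^2 + X)).eval (n:ℝ) = c₁ n := by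
    intro n
    simp only [eval_mul, eval_C, eval_add, eval_pow, eval_X]
    rw [show c₁ n = (T n : ℝ) from rfl, T_cast]
    ring
  have hm := master (C (1/2:ℝ) * (X^2 + X)) 2 hdeg c₁ hc
  have hval : (∑ i ∈ Finset.range (2+3), (-1:ℝ)^i * (2:ℝ)⁻¹^(i+1) * ((Δ_[1])^[i] c₁) 0)
      = -(1/8) := by
    simp only [fwdDiff_iter_eq_sum_shift]
    norm_num [Finset.sum_range_succ, c₁, T, Nat.choose]
  rw [hval] at hm
  exact hm

lemma tendsto_SF₂ : Tendsto (SF c₂) (𝓝[<] (1:ℝ)) (𝓝 (1/16)) := by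
  have hdeg : ((C (1/2:ℝ) * (X^2 + X))^2).natDegree ≤ 4 := by
    refine (natDegree_pow_le).trans ?_
    have h1 : (X^2 + X : ℝ[X]).natDegree ≤ 2 :=
      (natDegree_add_le _ _).trans (by simp [natDegree_X_pow, natDegree_X])
    have h2 : (C (1/2:ℝ) * (X^2 + X)).natDegree ≤ 2 := by
      refine (natDegree_mul_le).trans ?_
      simp only [natDegree_C]
      omega
    omega
  have hc : ∀ n : ℕ, ((C (1/2:ℝ) * (X^2 + X))^2).eval (n:ℝ) = c₂ n := by
    intro n
    simp only [eval_pow, eval_mul, eval_C, eval_add, eval_X]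
    rw [show c₂ n = ((T n : ℝ))^2 from rfl, T_cast]
    ring
  have hm := master ((C (1/2:ℝ) * (X^2 + X))^2) 4 hdeg c₂ hc
  have hval : (∑ i ∈ Finset.range (4+3), (-1:ℝ)^i * (2:ℝ)⁻¹^(i+1) * ((Δ_[1])^[i] c₂) 0)
      = 1/16 := by
    simp only [fwdDiff_iter_eq_sum_shift]
    norm_num [Finset.sum_range_succ, c₂, T, Nat.choose]
  rw [hval] at hm
  exact hm

lemma tendsto_inv_one : Tendsto (fun q : ℝ => q⁻¹) (𝓝[<] (1:ℝ)) (𝓝 1) := by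
  have h1 := (continuousAt_inv₀ (one_ne_zero : (1:ℝ) ≠ 0)).tendsto
  rw [inv_one] at h1
  exact h1.mono_left nhdsWithin_le_nhds

lemma Ioo01_mem : Set.Ioo (0:ℝ) 1 ∈ 𝓝[<] (1:ℝ) :=
  Ioo_mem_nhdsLT_of_mem ⟨by norm_num, le_refl 1⟩

lemma tendsto_Gd : Tendsto Gd (𝓝[<] (1:ℝ)) (𝓝 (-5/8)) := by
  have h := (tendsto_inv_one.mul tendsto_inv_one).mul (tendsto_SF₁.sub tendsto_SF₀)
  have : (1:ℝ) * 1 * (-(1/8) - 1/2) = -5/8 := by norm_num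
  rw [this] at h
  exact h

lemma tendsto_Hd : Tendsto Hd (𝓝[<] (1:ℝ)) (𝓝 (23/16)) := by
  have hB : Tendsto (fun q : ℝ => (3:ℝ) * SF c₁ q) (𝓝[<] (1:ℝ)) (𝓝 ((3:ℝ) * -(1/8))) :=
    tendsto_const_nhds.mul tendsto_SF₁
  have hC : Tendsto (fun q : ℝ => (2:ℝ) * SF c₀ q) (𝓝[<] (1:ℝ)) (𝓝 ((2:ℝ) * (1/2))) :=
    tendsto_const_nhds.mul tendsto_SF₀
  have h := ((tendsto_inv_one.mul tendsto_inv_one).mul tendsto_inv_one).mul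
    ((tendsto_SF₂.sub hB).add hC)
  have hv : (1:ℝ) * 1 * 1 * (1/16 - 3 * -(1/8) + 2 * (1/2)) = 23/16 := by norm_num
  rw [hv] at h
  exact h

lemma deriv_f₀_eventually : ∀ q ∈ Set.Ioo (0:ℝ) 1, deriv f₀ =ᶠ[𝓝 q] Gd := by
  intro q hq
  have hmem : Set.Ioo (0:ℝ) 1 ∈ 𝓝 q := isOpen_Ioo.mem_nhds hq
  exact Filter.eventually_of_mem hmem fun x hx => (hasDerivAt_f₀ hx.1 hx.2).deriv

end F0Proof

open F0Proof in
/-- `f₀` is twice differentiable on `(0,1)` and, as `q → 1⁻`: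
`f₀(q) → 1/2`, `f₀′(q) → -5/8` and `(1/2)·f₀″(q) → 23/32`. -/
theorem f0_limits_at_one :
    (∀ q ∈ Set.Ioo (0 : ℝ) 1, DifferentiableAt ℝ f₀ q ∧ DifferentiableAt ℝ (deriv f₀) q) ∧
    Tendsto f₀ (𝓝[<] (1 : ℝ)) (𝓝 (1 / 2)) ∧
    Tendsto (deriv f₀) (𝓝[<] (1 : ℝ)) (𝓝 (-5 / 8)) ∧
    Tendsto (fun q => (1 / 2) * deriv (deriv f₀) q) (𝓝[<] (1 : ℝ)) (𝓝 (23 / 32)) := by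
  refine ⟨?_, ?_, ?_, ?_⟩
  · intro q hq
    refine ⟨(hasDerivAt_f₀ hq.1 hq.2).differentiableAt, ?_⟩
    exact ((deriv_f₀_eventually q hq).differentiableAt_iff).mpr
      (hasDerivAt_Gd hq.1 hq.2).differentiableAt
  · have h := tendsto_inv_one.mul tendsto_SF₀
    rw [hf0eq]
    simpa using h
  · refine tendsto_Gd.congr' ?_
    filter_upwards [Ioo01_mem] with q hq
    exact ((hasDerivAt_f₀ hq.1 hq.2).deriv).symm
  · have h : Tendsto (fun q : ℝ => (1/2 : ℝ) * Hd q) (𝓝[<] (1:ℝ))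
        (𝓝 ((1/2 : ℝ) * (23/16))) := tendsto_const_nhds.mul tendsto_Hd
    have hv : (1/2 : ℝ) * (23/16) = 23/32 := by norm_num
    rw [hv] at h
    refine h.congr' ?_
    filter_upwards [Ioo01_mem] with q hq
    have h1 : deriv (deriv f₀) q = deriv Gd q :=
      Filter.EventuallyEq.deriv_eq (deriv_f₀_eventually q hq)
    have h2 : deriv Gd q = Hd q := (hasDerivAt_Gd hq.1 hq.2).deriv
    rw [h1, h2]
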